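/- arXiv:2605.00386 — 6 statements merged into one kernel-verified Lean document; each statement's English description precedes it below -/
import Mathlib

section
/- Let F : ℝ^n × ℝ^m → ℝ^m be continuous, let g_i : ℝ^n × ℝ^m → ℝ (i = 1,…,ℓ) be continuous and, for each fixed x, differentiable in y with gradients ∇_y g_i jointly continuous in (x, y). Let K be the set of pairs (x, y) for which there exists λ ∈ ℝ^ℓ with F(x,y) + Σ_i λ_i ∇_y g_i(x,y) = 0, λ ≥ 0, g(x,y) ≤ 0, and λ_i g_i(x,y) = 0 for all i. Suppose the sequentially bounded constraint qualification holds: for every sequence (x^k, y^k) in K converging to some (x̄, ȳ), one can choose multipliers λ^k for (x^k, y^k) forming a bounded sequence. Then K is a closed subset of ℝ^n × ℝ^m. -/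
open scoped Topology

/-- `lam` is a KKT multiplier for the pair `p = (x, y)`. -/
def IsKKTMultiplier {n m ℓ : ℕ}
    (F : EuclideanSpace ℝ (Fin n) → EuclideanSpace ℝ (Fin m) → EuclideanSpace ℝ (Fin m))
    (g : Fin ℓ → EuclideanSpace ℝ (Fin n) → EuclideanSpace ℝ (Fin m) → ℝ)
    (p : EuclideanSpace ℝ (Fin n) × EuclideanSpace ℝ (Fin m))
    (lam : Fin ℓ → ℝ) : Prop :=
  F p.1 p.2 + ∑ i, lam i • gradient (g i p.1) p.2 = 0 ∧
    ∀ i, 0 ≤ lam i ∧ g i p.1 p.2 ≤ 0 ∧ lam i * g i p.1 p.2 = 0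

/-- Under the sequentially bounded constraint qualification, the set of pairs
`(x, y)` admitting a KKT multiplier is closed. -/
theorem kkt_set_closed_of_sbcq {n m ℓ : ℕ}
    (F : EuclideanSpace ℝ (Fin n) → EuclideanSpace ℝ (Fin m) → EuclideanSpace ℝ (Fin m))
    (hF : Continuous fun p : EuclideanSpace ℝ (Fin n) × EuclideanSpace ℝ (Fin m) => F p.1 p.2)
    (g : Fin ℓ → EuclideanSpace ℝ (Fin n) → EuclideanSpace ℝ (Fin m) → ℝ)
    (hg : ∀ i, Continuous fun p : EuclideanSpace ℝ (Fin n) × EuclideanSpace ℝ (Fin m) =>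
      g i p.1 p.2)
    (hgdiff : ∀ i x, Differentiable ℝ (g i x))
    (hggrad : ∀ i, Continuous fun p : EuclideanSpace ℝ (Fin n) × EuclideanSpace ℝ (Fin m) =>
      gradient (g i p.1) p.2)
    (K : Set (EuclideanSpace ℝ (Fin n) × EuclideanSpace ℝ (Fin m)))
    (hK : K = {p | ∃ lam : Fin ℓ → ℝ, IsKKTMultiplier F g p lam})
    (hSBCQ : ∀ (p : ℕ → EuclideanSpace ℝ (Fin n) × EuclideanSpace ℝ (Fin m))
      (pbar : EuclideanSpace ℝ (Fin n) × EuclideanSpace ℝ (Fin m)),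
      (∀ k, p k ∈ K) → Filter.Tendsto p Filter.atTop (𝓝 pbar) →
      ∃ lam : ℕ → Fin ℓ → ℝ, (∀ k, IsKKTMultiplier F g (p k) (lam k)) ∧
        ∃ B : ℝ, ∀ k, ‖lam k‖ ≤ B) :
    IsClosed K := by

  apply IsSeqClosed.isClosed
  intro p pbar hmem htend
  obtain ⟨lam, hlam, B, hB⟩ := hSBCQ p pbar hmem htend
  have hbd : ∀ k, lam k ∈ Metric.closedBall (0 : Fin ℓ → ℝ) B := by
    intro k
    simpa [Metric.mem_closedBall, dist_zero_right] using hB k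
  obtain ⟨lambar, -, φ, hφ, hlamtend⟩ :=
    tendsto_subseq_of_bounded Metric.isBounded_closedBall hbd
  have htend' : Filter.Tendsto (p ∘ φ) Filter.atTop (𝓝 pbar) :=
    htend.comp hφ.tendsto_atTop
  have hcoord : ∀ i, Filter.Tendsto (fun k => lam (φ k) i) Filter.atTop (𝓝 (lambar i)) :=
    fun i => ((continuous_apply i).tendsto lambar).comp hlamtend
  rw [hK]
  refine ⟨lambar, ?_, fun i => ⟨?_, ?_, ?_⟩⟩
  · have h1 : Filter.Tendsto (fun k => F (p (φ k)).1 (p (φ k)).2 +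
        ∑ i, lam (φ k) i • gradient (g i (p (φ k)).1) (p (φ k)).2)
        Filter.atTop (𝓝 (F pbar.1 pbar.2 + ∑ i, lambar i • gradient (g i pbar.1) pbar.2)) := by
      refine Filter.Tendsto.add ((hF.tendsto pbar).comp htend') ?_
      refine tendsto_finset_sum _ fun i _ => ?_
      exact (hcoord i).smul (((hggrad i).tendsto pbar).comp htend')
    have heq : (fun k => F (p (φ k)).1 (p (φ k)).2 +
        ∑ i, lam (φ k) i • gradient (g i (p (φ k)).1) (p (φ k)).2)
        = fun _ => (0 : EuclideanSpace ℝ (Fin m)) :=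
      funext fun k => (hlam (φ k)).1
    rw [heq] at h1
    exact tendsto_nhds_unique h1 tendsto_const_nhds
  · exact le_of_tendsto_of_tendsto' tendsto_const_nhds (hcoord i)
      (fun k => ((hlam (φ k)).2 i).1)
  · exact le_of_tendsto_of_tendsto' (((hg i).tendsto pbar).comp htend')
      tendsto_const_nhds (fun k => ((hlam (φ k)).2 i).2.1)
  · have h1 : Filter.Tendsto (fun k => lam (φ k) i * g i (p (φ k)).1 (p (φ k)).2)
        Filter.atTop (𝓝 (lambar i * g i pbar.1 pbar.2)) :=
      (hcoord i).mul (((hg i).tendsto pbar).comp htend')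
    have heq : (fun k => lam (φ k) i * g i (p (φ k)).1 (p (φ k)).2) = fun _ => (0 : ℝ) :=
      funext fun k => ((hlam (φ k)).2 i).2.2
    rw [heq] at h1
    exact tendsto_nhds_unique h1 tendsto_const_nhds
end

section
/- Let F : ℝ^n × ℝ^m → ℝ^m be continuous and let g_i : ℝ^n × ℝ^m → ℝ (i = 1,…,ℓ) be continuous with gradients ∇_y g_i in y jointly continuous in (x, y). Suppose the Mangasarian–Fromovitz constraint qualification holds at (x̄, ȳ) with g(x̄, ȳ) ≤ 0: there exists v ∈ ℝ^m with ⟨∇_y g_i(x̄, ȳ), v⟩ < 0 for every index i with g_i(x̄, ȳ) = 0. Then for every sequence (x^k, y^k) → (x̄, ȳ) and every choice of KKT multipliers λ^k ∈ ℝ^ℓ at (x^k, y^k) (i.e. F(x^k,y^k) + Σ_i λ^k_i ∇_y g_i(x^k,y^k) = 0, λ^k ≥ 0, g(x^k,y^k) ≤ 0, λ^k_i g_i(x^k,y^k) = 0), the sequence (λ^k) is bounded. -/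
open scoped Topology

/-- Under MFCQ at a feasible point `(x̄, ȳ)`, every sequence of KKT multipliers
along points converging to `(x̄, ȳ)` is bounded. -/
theorem mfcq_implies_bounded_multipliers {n m ℓ : ℕ}
    (F : EuclideanSpace ℝ (Fin n) → EuclideanSpace ℝ (Fin m) → EuclideanSpace ℝ (Fin m))
    (hF : Continuous fun p : EuclideanSpace ℝ (Fin n) × EuclideanSpace ℝ (Fin m) => F p.1 p.2)
    (g : Fin ℓ → EuclideanSpace ℝ (Fin n) → EuclideanSpace ℝ (Fin m) → ℝ)
    (hg : ∀ i, Continuous fun p : EuclideanSpace ℝ (Fin n) × EuclideanSpace ℝ (Fin m) =>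
      g i p.1 p.2)
    (hgdiff : ∀ i x, Differentiable ℝ (g i x))
    (hggrad : ∀ i, Continuous fun p : EuclideanSpace ℝ (Fin n) × EuclideanSpace ℝ (Fin m) =>
      gradient (g i p.1) p.2)
    (xbar : EuclideanSpace ℝ (Fin n)) (ybar : EuclideanSpace ℝ (Fin m))
    (hfeas : ∀ i, g i xbar ybar ≤ 0)
    (hMFCQ : ∃ v : EuclideanSpace ℝ (Fin m), ∀ i, g i xbar ybar = 0 →
      inner ℝ (gradient (g i xbar) ybar) v < (0 : ℝ)) :
    ∀ (p : ℕ → EuclideanSpace ℝ (Fin n) × EuclideanSpace ℝ (Fin m)),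
      Filter.Tendsto p Filter.atTop (𝓝 (xbar, ybar)) →
      ∀ lam : ℕ → Fin ℓ → ℝ, (∀ k, IsKKTMultiplier F g (p k) (lam k)) →
      ∃ B : ℝ, ∀ k, ‖lam k‖ ≤ B := by
  obtain ⟨v, hv⟩ := hMFCQ
  -- a uniform negativity constant for the active gradients
  obtain ⟨c, hc0, hc⟩ : ∃ c : ℝ, 0 < c ∧ ∀ i, g i xbar ybar = 0 →
      (inner ℝ (gradient (g i xbar) ybar) v : ℝ) ≤ -c := by
    rcases isEmpty_or_nonempty (Fin ℓ) with h | h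
    · exact ⟨1, one_pos, fun i => isEmptyElim i⟩
    · refine ⟨Finset.univ.inf' Finset.univ_nonempty
        (fun i => if g i xbar ybar = 0 then -(inner ℝ (gradient (g i xbar) ybar) v : ℝ) else 1),
        ?_, ?_⟩
      · rw [Finset.lt_inf'_iff]
        intro i _
        split
        · next h' => linarith [hv i h']
        · exact one_pos
      · intro i hi
        have h2 := Finset.inf'_le
          (fun i => if g i xbar ybar = 0 then
            -(inner ℝ (gradient (g i xbar) ybar) v : ℝ) else 1)
          (Finset.mem_univ i)
        rw [if_pos hi] at h2
        linarith
  intro p hp lam hlam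
  set M : ℝ := ‖F xbar ybar‖ + 1 with hM
  have hM0 : 0 < M := by positivity
  -- eventual bound on ‖F (p k)‖
  have hFev : ∀ᶠ k in Filter.atTop, ‖F (p k).1 (p k).2‖ < M := by
    have ht : Filter.Tendsto (fun k => ‖F (p k).1 (p k).2‖) Filter.atTop
        (𝓝 ‖F xbar ybar‖) := ((hF.tendsto (xbar, ybar)).comp hp).norm
    exact ht.eventually_lt_const (by simp [hM])
  -- eventual negativity of active inner products
  have hgradev : ∀ i, g i xbar ybar = 0 → ∀ᶠ k in Filter.atTop,
      (inner ℝ (gradient (g i (p k).1) (p k).2) v : ℝ) ≤ -(c/2) := by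
    intro i hi
    have ht : Filter.Tendsto (fun k => (inner ℝ (gradient (g i (p k).1) (p k).2) v : ℝ))
        Filter.atTop (𝓝 (inner ℝ (gradient (g i xbar) ybar) v : ℝ)) :=
      (((hggrad i).inner continuous_const).tendsto (xbar, ybar)).comp hp
    have hlt : (inner ℝ (gradient (g i xbar) ybar) v : ℝ) < -(c/2) := by
      have := hc i hi; linarith
    exact (ht.eventually_lt_const hlt).mono fun k hk => hk.le
  -- eventual strict infeasibility of inactive constraints
  have hginev : ∀ i, g i xbar ybar ≠ 0 → ∀ᶠ k in Filter.atTop,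
      g i (p k).1 (p k).2 < 0 := by
    intro i hi
    have ht : Filter.Tendsto (fun k => g i (p k).1 (p k).2) Filter.atTop
        (𝓝 (g i xbar ybar)) := ((hg i).tendsto (xbar, ybar)).comp hp
    exact ht.eventually_lt_const (lt_of_le_of_ne (hfeas i) hi)
  have hall : ∀ᶠ k in Filter.atTop, ‖F (p k).1 (p k).2‖ < M ∧
      ∀ i, (g i xbar ybar = 0 →
          (inner ℝ (gradient (g i (p k).1) (p k).2) v : ℝ) ≤ -(c/2)) ∧
        (g i xbar ybar ≠ 0 → g i (p k).1 (p k).2 < 0) := by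
    refine hFev.and (Filter.eventually_all.2 fun i => ?_)
    rcases eq_or_ne (g i xbar ybar) 0 with h | h
    · exact (hgradev i h).mono fun k hk => ⟨fun _ => hk, fun h' => absurd h h'⟩
    · exact (hginev i h).mono fun k hk => ⟨fun h' => absurd h' h, fun _ => hk⟩
  obtain ⟨N, hN⟩ := Filter.eventually_atTop.1 hall
  set B1 : ℝ := M * ‖v‖ / (c / 2) with hB1def
  have hB1 : 0 ≤ B1 :=
    div_nonneg (mul_nonneg hM0.le (norm_nonneg v)) (by linarith)
  have key : ∀ k, N ≤ k → ‖lam k‖ ≤ B1 := by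
    intro k hk
    obtain ⟨hFk, hik⟩ := hN k hk
    obtain ⟨hst, hcomp⟩ := hlam k
    have heq : (inner ℝ (F (p k).1 (p k).2) v : ℝ)
        + ∑ i, lam k i * (inner ℝ (gradient (g i (p k).1) (p k).2) v : ℝ) = 0 := by
      have h2 : (inner ℝ (F (p k).1 (p k).2
          + ∑ i, lam k i • gradient (g i (p k).1) (p k).2) v : ℝ)
          = inner ℝ (0 : EuclideanSpace ℝ (Fin m)) v := by rw [hst]
      rw [inner_add_left, sum_inner, inner_zero_left] at h2
      simp_rw [real_inner_smul_left] at h2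
      exact h2
    have hterm : ∀ i, lam k i * (inner ℝ (gradient (g i (p k).1) (p k).2) v : ℝ)
        ≤ -(c/2) * lam k i := by
      intro i
      rcases eq_or_ne (g i xbar ybar) 0 with h | h
      · have h1 := (hik i).1 h
        have h2 := (hcomp i).1
        nlinarith
      · have h1 := (hik i).2 h
        have h2 := (hcomp i).2.2
        have h3 : lam k i = 0 := by
          by_contra h3
          exact absurd h2 (mul_ne_zero h3 (ne_of_lt h1))
        simp [h3]
    have hsum : ∑ i, lam k i * (inner ℝ (gradient (g i (p k).1) (p k).2) v : ℝ)
        ≤ -(c/2) * ∑ i, lam k i := by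
      rw [Finset.mul_sum]
      exact Finset.sum_le_sum fun i _ => hterm i
    have hFin : (inner ℝ (F (p k).1 (p k).2) v : ℝ) ≤ M * ‖v‖ :=
      le_trans (real_inner_le_norm _ _)
        (mul_le_mul_of_nonneg_right hFk.le (norm_nonneg v))
    have hS : (c/2) * ∑ i, lam k i ≤ M * ‖v‖ := by
      generalize hTe : (∑ i, lam k i * (inner ℝ (gradient (g i (p k).1) (p k).2) v : ℝ)) = T
        at heq hsum
      generalize hae : (inner ℝ (F (p k).1 (p k).2) v : ℝ) = a at heq hFin
      generalize hSe : (∑ i, lam k i) = S at hsum ⊢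
      generalize hMe : M * ‖v‖ = Mv at hFin ⊢
      linarith
    have hSle : ∑ i, lam k i ≤ B1 := by
      rw [hB1def, le_div_iff₀ (by linarith : (0:ℝ) < c / 2)]
      linarith
    rw [pi_norm_le_iff_of_nonneg hB1]
    intro i
    have h1 : lam k i ≤ ∑ j, lam k j :=
      Finset.single_le_sum (fun j _ => (hcomp j).1) (Finset.mem_univ i)
    rw [Real.norm_eq_abs, abs_of_nonneg (hcomp i).1]
    linarith
  refine ⟨B1 + ∑ j ∈ Finset.range N, ‖lam j‖, fun k => ?_⟩
  have hsum0 : 0 ≤ ∑ j ∈ Finset.range N, ‖lam j‖ :=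
    Finset.sum_nonneg fun j _ => norm_nonneg _
  rcases lt_or_ge k N with h | h
  · have h1 : ‖lam k‖ ≤ ∑ j ∈ Finset.range N, ‖lam j‖ :=
      Finset.single_le_sum (fun j _ => norm_nonneg (lam j)) (Finset.mem_range.2 h)
    linarith
  · linarith [key k h]
end

section
/- Basic existence theorem for MPEC: Let f : ℝ^n × ℝ^m → ℝ be continuous, let Z ⊆ ℝ^n × ℝ^m be closed, let F : ℝ^n × ℝ^m → ℝ^m be continuous, and let g_i : ℝ^n × ℝ^m → ℝ (i = 1,…,ℓ) be continuous, with g_i(x, ·) convex and differentiable in y and with ∇_y g_i jointly continuous. Define C(x) = {y : g_i(x,y) ≤ 0 for all i} and let S(x) be the set of y with y ∈ C(x) and ⟨F(x,y), v − y⟩ ≥ 0 for all v ∈ C(x). Let 𝓕 = {(x,y) ∈ Z : y ∈ S(x)}. Assume: (i) every (x, y) ∈ 𝓕 admits a KKT multiplier λ ∈ ℝ^ℓ (λ ≥ 0, F(x,y) + Σ_i λ_i ∇_y g_i(x,y) = 0, λ_i g_i(x,y) = 0); (ii) SBCQ holds: along every sequence in {(x,y) : a KKT multiplier exists} converging in ℝ^n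 × ℝ^m, KKT multipliers can be chosen bounded; (iii) for some α ∈ ℝ the level set {(x,y) ∈ 𝓕 : f(x,y) ≤ α} is nonempty and bounded. Then f attains a global minimum over 𝓕. -/
open scoped Topology

lemma grad_ineq {m : ℕ} (g : EuclideanSpace ℝ (Fin m) → ℝ)
    (hc : ConvexOn ℝ Set.univ g) (hd : Differentiable ℝ g)
    (y v : EuclideanSpace ℝ (Fin m)) :
    inner ℝ (gradient g y) (v - y) ≤ g v - g y := by
  set φ : ℝ → ℝ := fun t => g (AffineMap.lineMap y v t) with hφ
  have hφc : ConvexOn ℝ Set.univ φ := by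
    have h := hc.comp_affineMap (AffineMap.lineMap y v)
    exact h
  have hline : HasDerivAt (fun t : ℝ => AffineMap.lineMap y v t) (v - y) (0 : ℝ) := by
    have h1 : HasDerivAt (fun t : ℝ => t • (v - y) + y) (v - y) (0 : ℝ) := by
      simpa using ((hasDerivAt_id (0:ℝ)).smul_const (v - y)).add_const y
    refine h1.congr_of_eventuallyEq ?_
    filter_upwards with t
    simp only [AffineMap.lineMap_apply_module]
    module
  have hgrad : HasFDerivAt g ((InnerProductSpace.toDual ℝ _) (gradient g y))
      (AffineMap.lineMap y v (0:ℝ)) := by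
    rw [AffineMap.lineMap_apply_zero]
    exact hasGradientAt_iff_hasFDerivAt.mp (hd y).hasGradientAt
  have hder : HasDerivAt φ (inner ℝ (gradient g y) (v - y)) 0 := by
    have := hgrad.comp_hasDerivAt (0:ℝ) hline
    rw [InnerProductSpace.toDual_apply_apply] at this
    exact this
  have := hφc.le_slope_of_hasDerivAt (Set.mem_univ (0:ℝ)) (Set.mem_univ (1:ℝ)) zero_lt_one hder
  rw [slope_def_field] at this
  simpa [hφ] using this

/-- Basic existence theorem for MPEC: continuous objective, closed joint
constraint set, convex differentiable lower-level constraints, KKT multipliers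
on the feasible region, SBCQ, and a nonempty bounded level set imply that the
objective attains a global minimum over the MPEC feasible region. -/
theorem mpec_basic_existence {n m ℓ : ℕ}
    (f : EuclideanSpace ℝ (Fin n) × EuclideanSpace ℝ (Fin m) → ℝ)
    (hf : Continuous f)
    (Z : Set (EuclideanSpace ℝ (Fin n) × EuclideanSpace ℝ (Fin m)))
    (hZ : IsClosed Z)
    (F : EuclideanSpace ℝ (Fin n) → EuclideanSpace ℝ (Fin m) → EuclideanSpace ℝ (Fin m))
    (hF : Continuous fun p : EuclideanSpace ℝ (Fin n) × EuclideanSpace ℝ (Fin m) => F p.1 p.2)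
    (g : Fin ℓ → EuclideanSpace ℝ (Fin n) → EuclideanSpace ℝ (Fin m) → ℝ)
    (hg : ∀ i, Continuous fun p : EuclideanSpace ℝ (Fin n) × EuclideanSpace ℝ (Fin m) =>
      g i p.1 p.2)
    (hgconv : ∀ i x, ConvexOn ℝ Set.univ (g i x))
    (hgdiff : ∀ i x, Differentiable ℝ (g i x))
    (hggrad : ∀ i, Continuous fun p : EuclideanSpace ℝ (Fin n) × EuclideanSpace ℝ (Fin m) =>
      gradient (g i p.1) p.2)
    (C : EuclideanSpace ℝ (Fin n) → Set (EuclideanSpace ℝ (Fin m)))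
    (hC : ∀ x, C x = {y | ∀ i, g i x y ≤ 0})
    (S : EuclideanSpace ℝ (Fin n) → Set (EuclideanSpace ℝ (Fin m)))
    (hS : ∀ x, S x = {y | y ∈ C x ∧ ∀ v ∈ C x, (0 : ℝ) ≤ inner ℝ (F x y) (v - y)})
    (Feas : Set (EuclideanSpace ℝ (Fin n) × EuclideanSpace ℝ (Fin m)))
    (hFeas : Feas = {p | p ∈ Z ∧ p.2 ∈ S p.1})
    (hmult : ∀ p ∈ Feas, ∃ lam : Fin ℓ → ℝ, IsKKTMultiplier F g p lam)
    (hSBCQ : ∀ (p : ℕ → EuclideanSpace ℝ (Fin n) × EuclideanSpace ℝ (Fin m))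
      (pbar : EuclideanSpace ℝ (Fin n) × EuclideanSpace ℝ (Fin m)),
      (∀ k, ∃ lam : Fin ℓ → ℝ, IsKKTMultiplier F g (p k) lam) →
      Filter.Tendsto p Filter.atTop (𝓝 pbar) →
      ∃ lam : ℕ → Fin ℓ → ℝ, (∀ k, IsKKTMultiplier F g (p k) (lam k)) ∧
        ∃ B : ℝ, ∀ k, ‖lam k‖ ≤ B)
    (α : ℝ)
    (hlevel_ne : {p ∈ Feas | f p ≤ α}.Nonempty)
    (hlevel_bdd : Bornology.IsBounded {p ∈ Feas | f p ≤ α}) :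
    ∃ p ∈ Feas, ∀ q ∈ Feas, f p ≤ f q := by
  classical
  set L := {p ∈ Feas | f p ≤ α} with hL
  -- L is closed
  have hclosed : IsClosed L := by
    apply IsSeqClosed.isClosed
    intro pk pbar hpk hlim
    have hpkF : ∀ k, pk k ∈ Feas := fun k => (hpk k).1
    obtain ⟨lam, hlam, B, hB⟩ := hSBCQ pk pbar (fun k => hmult _ (hpkF k)) hlim
    have hcb : IsCompact (Metric.closedBall (0 : Fin ℓ → ℝ) B) :=
      isCompact_closedBall _ _
    obtain ⟨lb, _, ψ, hψ, hψlim⟩ := hcb.tendsto_subseq (x := lam) (fun k => by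
      simpa [Metric.mem_closedBall, dist_zero_right] using hB k)
    have hsub : Filter.Tendsto (fun k => pk (ψ k)) Filter.atTop (𝓝 pbar) :=
      hlim.comp hψ.tendsto_atTop
    have hlamcoord : ∀ i, Filter.Tendsto (fun k => lam (ψ k) i) Filter.atTop (𝓝 (lb i)) := by
      intro i
      exact ((continuous_apply i).tendsto lb).comp hψlim
    -- limits of KKT conditions
    have hnn : ∀ i, 0 ≤ lb i := fun i =>
      ge_of_tendsto (hlamcoord i) (Filter.Eventually.of_forall fun k =>
        ((hlam (ψ k)).2 i).1)
    have hgle : ∀ i, g i pbar.1 pbar.2 ≤ 0 := fun i =>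
      le_of_tendsto (((hg i).tendsto pbar).comp hsub)
        (Filter.Eventually.of_forall fun k => ((hlam (ψ k)).2 i).2.1)
    have hcomp : ∀ i, lb i * g i pbar.1 pbar.2 = 0 := by
      intro i
      have hT : Filter.Tendsto (fun k => lam (ψ k) i * g i (pk (ψ k)).1 (pk (ψ k)).2)
          Filter.atTop (𝓝 (lb i * g i pbar.1 pbar.2)) :=
        (hlamcoord i).mul (((hg i).tendsto pbar).comp hsub)
      have h0 : ∀ k, lam (ψ k) i * g i (pk (ψ k)).1 (pk (ψ k)).2 = 0 := fun k =>
        ((hlam (ψ k)).2 i).2.2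
      exact (tendsto_nhds_unique hT
        (tendsto_const_nhds.congr fun k => (h0 k).symm)).symm ▸ rfl
    have hstat : F pbar.1 pbar.2 + ∑ i, lb i • gradient (g i pbar.1) pbar.2 = 0 := by
      have hT : Filter.Tendsto (fun k => F (pk (ψ k)).1 (pk (ψ k)).2 +
          ∑ i, lam (ψ k) i • gradient (g i (pk (ψ k)).1) (pk (ψ k)).2)
          Filter.atTop
          (𝓝 (F pbar.1 pbar.2 + ∑ i, lb i • gradient (g i pbar.1) pbar.2)) := by
        refine Filter.Tendsto.add ((hF.tendsto pbar).comp hsub) ?_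
        refine tendsto_finset_sum _ fun i _ => ?_
        exact (hlamcoord i).smul (((hggrad i).tendsto pbar).comp hsub)
      have h0 : ∀ k, F (pk (ψ k)).1 (pk (ψ k)).2 +
          ∑ i, lam (ψ k) i • gradient (g i (pk (ψ k)).1) (pk (ψ k)).2 = 0 := fun k =>
        (hlam (ψ k)).1
      exact tendsto_nhds_unique hT (tendsto_const_nhds.congr fun k => (h0 k).symm)
    -- pbar ∈ Z
    have hZmem : pbar ∈ Z := hZ.mem_of_tendsto hlim
      (Filter.Eventually.of_forall fun k => by
        have := hpkF k; rw [hFeas] at this; exact this.1)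
    -- pbar.2 ∈ S pbar.1
    have hSmem : pbar.2 ∈ S pbar.1 := by
      rw [hS, hC]
      refine ⟨hgle, fun v hv => ?_⟩
      have hFeq : F pbar.1 pbar.2 = -∑ i, lb i • gradient (g i pbar.1) pbar.2 :=
        eq_neg_of_add_eq_zero_left hstat
      rw [hFeq, inner_neg_left, sum_inner]
      have hterm : ∀ i ∈ Finset.univ,
          lb i * g i pbar.1 v ≤ 0 := fun i _ =>
        mul_nonpos_of_nonneg_of_nonpos (hnn i) (hv i)
      have hsumle : ∑ i, inner ℝ (lb i • gradient (g i pbar.1) pbar.2) (v - pbar.2) ≤ (0:ℝ) := by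
        refine le_trans (Finset.sum_le_sum fun i _ => ?_)
          (le_trans (Finset.sum_le_sum hterm) (by simp))
        · rw [real_inner_smul_left]
          calc lb i * inner ℝ (gradient (g i pbar.1) pbar.2) (v - pbar.2)
              ≤ lb i * (g i pbar.1 v - g i pbar.1 pbar.2) :=
                mul_le_mul_of_nonneg_left
                  (grad_ineq (g i pbar.1) (hgconv i pbar.1) (hgdiff i pbar.1) pbar.2 v)
                  (hnn i)
            _ = lb i * g i pbar.1 v - lb i * g i pbar.1 pbar.2 := by ring
            _ = lb i * g i pbar.1 v := by rw [hcomp i]; ring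
      linarith
    refine ⟨by rw [hFeas]; exact ⟨hZmem, hSmem⟩, ?_⟩
    exact le_of_tendsto ((hf.tendsto pbar).comp hlim)
      (Filter.Eventually.of_forall fun k => (hpk k).2)
  -- compactness and minimum
  have hcpt : IsCompact L := Metric.isCompact_of_isClosed_isBounded hclosed hlevel_bdd
  obtain ⟨p, hpL, hpmin⟩ := hcpt.exists_isMinOn hlevel_ne hf.continuousOn
  refine ⟨p, hpL.1, fun q hq => ?_⟩
  by_cases hqα : f q ≤ α
  · exact hpmin ⟨hq, hqα⟩
  · exact le_trans hpL.2 (le_of_not_ge hqα)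
end

section
/- Frank–Wolfe theorem: Let Q : ℝ^d → ℝ^d be a symmetric linear map, c ∈ ℝ^d, and define the quadratic function f(x) = ½⟨x, Q x⟩ + ⟨c, x⟩. Let P = {x ∈ ℝ^d : ⟨a_i, x⟩ ≤ b_i for i = 1,…,k} be a nonempty polyhedron. If f is bounded below on P, then f attains its minimum over P. -/
open Filter Topology Module Metric

local notation "⟪" x ", " y "⟫" => @inner ℝ _ _ x y

/-- If a linear function is bounded below on `[0, ∞)`, its slope is nonnegative. -/
lemma lin_lower {β γ L : ℝ} (h : ∀ t : ℝ, 0 ≤ t → L ≤ β * t + γ) : 0 ≤ β := by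
  by_contra hβ
  push_neg at hβ
  have h2 := h _ (le_max_left 0 ((L - γ) / β + 1))
  have h3 : (L - γ) / β + 1 ≤ max 0 ((L - γ) / β + 1) := le_max_right _ _
  have h4 : β * max 0 ((L - γ) / β + 1) ≤ β * ((L - γ) / β + 1) :=
    mul_le_mul_of_nonpos_left h3 hβ.le
  have hβ' : β ≠ 0 := ne_of_lt hβ
  have h5 : β * ((L - γ) / β + 1) = (L - γ) + β := by field_simp
  linarith

lemma quad_expand {E : Type} [NormedAddCommGroup E] [InnerProductSpace ℝ E]
    (Q : E →ₗ[ℝ] E) (hQ : ∀ x y : E, ⟪Q x, y⟫ = ⟪x, Q y⟫) (c x v : E) (t : ℝ) :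
    (1 / 2) * ⟪x + t • v, Q (x + t • v)⟫ + ⟪c, x + t • v⟫ =
      ((1 / 2) * ⟪x, Q x⟫ + ⟪c, x⟫) + t * ⟪Q x + c, v⟫ + t ^ 2 * ((1 / 2) * ⟪v, Q v⟫) := by
  have h1 : ⟪v, Q x⟫ = ⟪Q x, v⟫ := real_inner_comm _ _
  have h2 : ⟪x, Q v⟫ = ⟪Q x, v⟫ := (hQ x v).symm
  simp only [map_add, map_smul, inner_add_left, inner_add_right, real_inner_smul_left,
    real_inner_smul_right, h1, h2]
  ring

set_option maxHeartbeats 1000000 in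
theorem frank_wolfe_aux (n : ℕ) :
    ∀ (E : Type) [NormedAddCommGroup E] [InnerProductSpace ℝ E] [FiniteDimensional ℝ E],
    finrank ℝ E ≤ n →
    ∀ (Q : E →ₗ[ℝ] E), (∀ x y : E, ⟪Q x, y⟫ = ⟪x, Q y⟫) →
    ∀ (c : E) (f : E → ℝ), (∀ x, f x = (1 / 2) * ⟪x, Q x⟫ + ⟪c, x⟫) →
    ∀ (ι : Type) [Fintype ι] (a : ι → E) (b : ι → ℝ) (P : Set E),
    P = {x | ∀ i, ⟪a i, x⟫ ≤ b i} → P.Nonempty →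
    ∀ L : ℝ, (∀ x ∈ P, L ≤ f x) →
    ∃ x ∈ P, ∀ y ∈ P, f x ≤ f y := by
  induction n with
  | zero =>
    intro E _ _ _ hrank Q hQ c f hf ι _ a b P hPdef hPne L hL
    have : Subsingleton E := by
      rw [← finrank_zero_iff (R := ℝ)]
      omega
    obtain ⟨x₀, hx₀⟩ := hPne
    exact ⟨x₀, hx₀, fun y hy => by rw [Subsingleton.elim y x₀]⟩
  | succ n IH =>
    intro E _ _ _ hrank Q hQ c f hf ι _ a b P hPdef hPne L hL
    classical
    -- continuity of f, closedness of P
    have hfc : Continuous f := by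
      have : f = fun x => (1 / 2) * ⟪x, Q x⟫ + ⟪c, x⟫ := funext hf
      rw [this]
      exact ((continuous_const.mul (continuous_id.inner
        Q.continuous_of_finiteDimensional)).add (continuous_const.inner continuous_id))
    have hPc : IsClosed P := by
      rw [hPdef, Set.setOf_forall]
      exact isClosed_iInter fun i =>
        isClosed_le (continuous_const.inner continuous_id) continuous_const
    -- the infimum
    set m : ℝ := sInf (f '' P) with hm
    have hbdd : BddBelow (f '' P) := ⟨L, by rintro y ⟨x, hx, rfl⟩; exact hL x hx⟩
    have hmle : ∀ x ∈ P, m ≤ f x := fun x hx => csInf_le hbdd ⟨x, hx, rfl⟩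
    -- minimizing sequence
    have hseq : ∀ k : ℕ, ∃ x ∈ P, f x < m + 1 / (k + 1) := by
      intro k
      have hpos : (0 : ℝ) < 1 / (k + 1) := by positivity
      have : sInf (f '' P) < m + 1 / (k + 1) := by
        rw [← hm]; linarith
      obtain ⟨y, ⟨x, hx, rfl⟩, hy⟩ := exists_lt_of_csInf_lt (hPne.image f) this
      exact ⟨x, hx, hy⟩
    choose x hxP hxf using hseq
    have hone : Tendsto (fun k : ℕ => m + 1 / ((k : ℝ) + 1)) atTop (𝓝 m) := by
      have := tendsto_one_div_add_atTop_nhds_zero_nat (𝕜 := ℝ)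
      simpa using tendsto_const_nhds.add this
    have hfm : Tendsto (fun k => f (x k)) atTop (𝓝 m) :=
      tendsto_of_tendsto_of_tendsto_of_le_of_le tendsto_const_nhds hone
        (fun k => hmle _ (hxP k)) (fun k => (hxf k).le)
    by_cases hA : ∃ M : ℝ, ∃ᶠ k in atTop, x k ∈ closedBall (0 : E) M
    · -- bounded minimizing subsequence: compactness
      obtain ⟨M, hM⟩ := hA
      obtain ⟨x₀, -, φ, hφ, hlim⟩ := (isCompact_closedBall (0 : E) M).tendsto_subseq' hM
      have hx₀P : x₀ ∈ P :=
        hPc.mem_of_tendsto hlim (Eventually.of_forall fun k => hxP _)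
      have h1 : Tendsto (fun k => f (x (φ k))) atTop (𝓝 (f x₀)) :=
        ((hfc.tendsto x₀).comp hlim)
      have h2 : Tendsto (fun k => f (x (φ k))) atTop (𝓝 m) :=
        hfm.comp hφ.tendsto_atTop
      have : f x₀ = m := tendsto_nhds_unique h1 h2
      exact ⟨x₀, hx₀P, fun y hy => this ▸ hmle y hy⟩
    · -- unbounded case
      push_neg at hA
      have htend : Tendsto (fun k => ‖x k‖) atTop atTop := by
        rw [Filter.tendsto_atTop]
        intro M
        have := (hA M)
        filter_upwards [this] with k hk
        rw [mem_closedBall, dist_zero_right, not_le] at hk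
        exact hk.le
      -- extract a recession direction v
      have hev : ∀ᶠ k in atTop, (1 : ℝ) ≤ ‖x k‖ := htend.eventually_ge_atTop 1
      have hsph : ∃ᶠ k in atTop, ‖x k‖⁻¹ • x k ∈ sphere (0 : E) 1 := by
        apply (hev.mono ?_).frequently
        intro k hk
        have hk0 : ‖x k‖ ≠ 0 := by positivity
        simp [mem_sphere_zero_iff_norm, norm_smul, abs_of_nonneg (norm_nonneg (x k)),
          inv_mul_cancel₀ hk0]
      obtain ⟨v, hvs, φ, hφ, huv⟩ := (isCompact_sphere (0 : E) 1).tendsto_subseq' hsph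
      rw [mem_sphere_zero_iff_norm] at hvs
      have hv0 : v ≠ 0 := by intro h; rw [h, norm_zero] at hvs; norm_num at hvs
      -- the subsequence z
      set z : ℕ → E := fun k => x (φ k) with hzdef
      have hzP : ∀ k, z k ∈ P := fun k => hxP _
      have hnz : Tendsto (fun k => ‖z k‖) atTop atTop := htend.comp hφ.tendsto_atTop
      have hfz : Tendsto (fun k => f (z k)) atTop (𝓝 m) := hfm.comp hφ.tendsto_atTop
      have huz : Tendsto (fun k => ‖z k‖⁻¹ • z k) atTop (𝓝 v) := huv
      have hnz1 : ∀ᶠ k in atTop, (1 : ℝ) ≤ ‖z k‖ := hnz.eventually_ge_atTop 1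
      have hinv : Tendsto (fun k => ‖z k‖⁻¹) atTop (𝓝 0) :=
        tendsto_inv_atTop_zero.comp hnz
      -- v is a recession direction of P
      have hva : ∀ i, ⟪a i, v⟫ ≤ 0 := by
        intro i
        have h1 : Tendsto (fun k => ⟪a i, ‖z k‖⁻¹ • z k⟫) atTop (𝓝 ⟪a i, v⟫) :=
          tendsto_const_nhds.inner huz
        have h2 : Tendsto (fun k => ‖z k‖⁻¹ * b i) atTop (𝓝 0) := by
          simpa using hinv.mul_const (b i)
        refine le_of_tendsto_of_tendsto h1 h2 ?_
        filter_upwards [hnz1] with k hk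
        have hpos : (0 : ℝ) ≤ ‖z k‖⁻¹ := by positivity
        have : ⟪a i, z k⟫ ≤ b i := by
          have := hzP k; rw [hPdef] at this; exact this i
        rw [real_inner_smul_right]
        exact mul_le_mul_of_nonneg_left this hpos
      -- ⟪v, Q v⟫ = 0
      have hQv0 : ⟪v, Q v⟫ = (0 : ℝ) := by
        have hQc : Continuous fun y : E => Q y := Q.continuous_of_finiteDimensional
        have h1 : Tendsto (fun k => ⟪‖z k‖⁻¹ • z k, Q (‖z k‖⁻¹ • z k)⟫) atTop (𝓝 ⟪v, Q v⟫) :=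
          huz.inner ((hQc.tendsto v).comp huz)
        have hsq : Tendsto (fun k => ‖z k‖ ^ 2) atTop atTop := by
          have := hnz.atTop_mul_atTop₀ hnz
          simpa [sq] using this
        have hterm1 : Tendsto (fun k => 2 * f (z k) * (‖z k‖ ^ 2)⁻¹) atTop (𝓝 0) := by
          have := (hfz.const_mul 2).mul (tendsto_inv_atTop_zero.comp hsq)
          simpa using this
        have hterm2 : Tendsto (fun k => 2 * ⟪c, ‖z k‖⁻¹ • z k⟫ * ‖z k‖⁻¹) atTop (𝓝 0) := by
          have : Tendsto (fun k => ⟪c, ‖z k‖⁻¹ • z k⟫) atTop (𝓝 ⟪c, v⟫) :=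
            tendsto_const_nhds.inner huz
          have := (this.const_mul 2).mul hinv
          simpa using this
        have h2 : Tendsto
            (fun k => 2 * f (z k) * (‖z k‖ ^ 2)⁻¹ - 2 * ⟪c, ‖z k‖⁻¹ • z k⟫ * ‖z k‖⁻¹)
            atTop (𝓝 0) := by
          simpa using hterm1.sub hterm2
        have heq : (fun k => 2 * f (z k) * (‖z k‖ ^ 2)⁻¹ - 2 * ⟪c, ‖z k‖⁻¹ • z k⟫ * ‖z k‖⁻¹)
            =ᶠ[atTop] fun k => ⟪‖z k‖⁻¹ • z k, Q (‖z k‖⁻¹ • z k)⟫ := by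
          filter_upwards [hnz1] with k hk
          have hne : ‖z k‖ ≠ 0 := by positivity
          simp only [hf, map_smul, real_inner_smul_left, real_inner_smul_right]
          field_simp
          ring
        have h2' : Tendsto (fun k => ⟪‖z k‖⁻¹ • z k, Q (‖z k‖⁻¹ • z k)⟫) atTop (𝓝 0) :=
          h2.congr' heq
        exact tendsto_nhds_unique h1 h2'
      -- slope nonnegativity along v
      have hslope : ∀ x ∈ P, (0 : ℝ) ≤ ⟪Q x + c, v⟫ := by
        intro w hw
        apply lin_lower (γ := f w) (L := L)
        intro t ht
        have hwt : w + t • v ∈ P := by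
          rw [hPdef]
          intro i
          have hw' : ⟪a i, w⟫ ≤ b i := by rw [hPdef] at hw; exact hw i
          have : t * ⟪a i, v⟫ ≤ 0 := mul_nonpos_of_nonneg_of_nonpos ht (hva i)
          rw [inner_add_right, real_inner_smul_right]
          linarith
        have hLt := hL _ hwt
        rw [hf] at hLt
        rw [quad_expand Q hQ c w v t, hQv0] at hLt
        rw [hf w] at *
        linarith
      by_cases hline : ∀ i, ⟪a i, v⟫ = 0
      · -- v is a lineality direction: reduce to the hyperplane orthogonal to v
        have hlin : ∀ w ∈ P, ∀ t : ℝ, w + t • v ∈ P := by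
          intro w hw t
          rw [hPdef] at hw ⊢
          intro i
          have := hw i
          simp only [Set.mem_setOf_eq] at *
          rw [inner_add_right, real_inner_smul_right, hline i]
          linarith
        have hslope0 : ∀ w ∈ P, ⟪Q w + c, v⟫ = (0 : ℝ) := by
          intro w hw
          refine le_antisymm ?_ (hslope w hw)
          have h2 : (0 : ℝ) ≤ ⟪Q w + c, -v⟫ := by
            apply lin_lower (γ := f w) (L := L)
            intro t ht
            have hwt : w + t • (-v) ∈ P := by
              rw [smul_neg, ← neg_smul]
              exact hlin w hw (-t)
            have hLt := hL _ hwt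
            rw [hf] at hLt
            rw [quad_expand Q hQ c w (-v) t,
              show ⟪-v, Q (-v)⟫ = ⟪v, Q v⟫ by rw [map_neg, inner_neg_neg], hQv0] at hLt
            rw [hf w]
            linarith
          rw [inner_neg_right] at h2
          linarith
        set W := (ℝ ∙ v)ᗮ with hWdef
        have hrankW : finrank ℝ W ≤ n := by
          have h1 : finrank ℝ (ℝ ∙ v) + finrank ℝ W = finrank ℝ E := by
            rw [hWdef]
            exact Submodule.finrank_add_finrank_orthogonal _
          rw [finrank_span_singleton hv0] at h1
          omega
        set Q' : W →ₗ[ℝ] W := W.orthogonalProjectionOnto.toLinearMap ∘ₗ Q ∘ₗ W.subtype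
          with hQ'def
        have hQ'app : ∀ w : W, Q' w = W.orthogonalProjectionOnto (Q (w : E)) := fun w => rfl
        have hQ'sym : ∀ w₁ w₂ : W, ⟪Q' w₁, w₂⟫ = ⟪w₁, Q' w₂⟫ := by
          intro w₁ w₂
          rw [hQ'app, hQ'app, Submodule.inner_orthogonalProjectionOnto_eq_of_mem_right,
            Submodule.inner_orthogonalProjectionOnto_eq_of_mem_left]
          exact hQ _ _
        set c' : W := W.orthogonalProjectionOnto c with hc'def
        set f' : W → ℝ := fun w => (1 / 2) * ⟪w, Q' w⟫ + ⟪c', w⟫ with hf'def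
        have hf'coe : ∀ w : W, f' w = f (w : E) := by
          intro w
          rw [hf]
          simp only [hf'def]
          rw [hQ'app, Submodule.inner_orthogonalProjectionOnto_eq_of_mem_left, hc'def,
            Submodule.inner_orthogonalProjectionOnto_eq_of_mem_right]
        set a' : ι → W := fun i => W.orthogonalProjectionOnto (a i) with ha'def
        set P' : Set W := {w : W | ∀ i, ⟪a' i, w⟫ ≤ b i} with hP'def
        have hkey : ∀ (w : W) i, ⟪a' i, w⟫ = ⟪a i, (w : E)⟫ := by
          intro w i
          simp only [ha'def]
          rw [Submodule.inner_orthogonalProjectionOnto_eq_of_mem_right]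
        have hmemP' : ∀ w : W, w ∈ P' ↔ (w : E) ∈ P := by
          intro w
          rw [hPdef, hP'def]
          simp only [Set.mem_setOf_eq, hkey]
        have hproj : ∀ w : E, w ∈ P →
            ((W.orthogonalProjectionOnto w : E) ∈ P ∧ f (W.orthogonalProjectionOnto w : E) = f w) := by
          intro w hw
          have hmem : w - W.orthogonalProjectionOnto w ∈ (ℝ ∙ v) := by
            have h1 : w - W.orthogonalProjectionOnto w ∈ Wᗮ :=
              Submodule.sub_starProjection_mem_orthogonal (K := W) w
            have h2 : Wᗮ = ℝ ∙ v := by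
              rw [hWdef]
              exact Submodule.orthogonal_orthogonal _
            rwa [h2] at h1
          obtain ⟨s, hs⟩ := Submodule.mem_span_singleton.mp hmem
          have heq : (W.orthogonalProjectionOnto w : E) = w + (-s) • v := by
            rw [neg_smul, hs]
            abel
          constructor
          · rw [heq]
            exact hlin w hw _
          · rw [heq, hf, hf, quad_expand Q hQ c w v (-s), hQv0, hslope0 w hw]
            ring
        obtain ⟨x₀, hx₀⟩ := hPne
        have hP'ne : P'.Nonempty :=
          ⟨W.orthogonalProjectionOnto x₀, (hmemP' _).mpr (hproj x₀ hx₀).1⟩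
        have hL' : ∀ w ∈ P', L ≤ f' w := fun w hw => by
          rw [hf'coe]
          exact hL _ ((hmemP' w).mp hw)
        obtain ⟨wm, hwmP, hwmmin⟩ :=
          IH W hrankW Q' hQ'sym c' f' (fun _ => rfl) ι a' b P' rfl hP'ne L hL'
        refine ⟨(wm : E), (hmemP' _).mp hwmP, fun y hy => ?_⟩
        have h1 : f' wm ≤ f' (W.orthogonalProjectionOnto y) :=
          hwmmin _ ((hmemP' _).mpr (hproj y hy).1)
        rw [hf'coe, hf'coe, (hproj y hy).2] at h1
        exact h1
      · -- some constraint strictly decreases along v: move back to a face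
        push_neg at hline
        obtain ⟨i₁, hi₁⟩ := hline
        set I : Finset ι := Finset.univ.filter (fun i => ⟪a i, v⟫ < 0) with hIdef
        have hI : I.Nonempty := by
          refine ⟨i₁, ?_⟩
          rw [hIdef, Finset.mem_filter]
          exact ⟨Finset.mem_univ _, lt_of_le_of_ne (hva i₁) hi₁⟩
        have hmemI : ∀ i ∈ I, ⟪a i, v⟫ < 0 := by
          intro i hi
          rw [hIdef, Finset.mem_filter] at hi
          exact hi.2
        set t : ℕ → ℝ := fun k => I.inf' hI (fun i => (b i - ⟪a i, z k⟫) / (-⟪a i, v⟫))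
          with htdef
        have ht0 : ∀ k, 0 ≤ t k := by
          intro k
          rw [htdef]
          apply Finset.le_inf'
          intro i hi
          have h1 := hmemI i hi
          have h2 : ⟪a i, z k⟫ ≤ b i := by
            have := hzP k; rw [hPdef] at this; exact this i
          exact div_nonneg (by linarith) (by linarith)
        set z' : ℕ → E := fun k => z k - t k • v with hz'def
        have hz'P : ∀ k, z' k ∈ P := by
          intro k
          rw [hPdef]
          intro i
          simp only [Set.mem_setOf_eq, hz'def]
          rw [inner_sub_right, real_inner_smul_right]
          have h2 : ⟪a i, z k⟫ ≤ b i := by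
            have := hzP k; rw [hPdef] at this; exact this i
          by_cases hi : ⟪a i, v⟫ < 0
          · have hiI : i ∈ I := by
              rw [hIdef, Finset.mem_filter]
              exact ⟨Finset.mem_univ _, hi⟩
            have h3 : t k ≤ (b i - ⟪a i, z k⟫) / (-⟪a i, v⟫) := by
              rw [htdef]
              exact Finset.inf'_le _ hiI
            have h4 : (0 : ℝ) < -⟪a i, v⟫ := by linarith
            rw [le_div_iff₀ h4, mul_neg] at h3
            linarith
          · push_neg at hi
            have : 0 ≤ t k * ⟪a i, v⟫ := mul_nonneg (ht0 k) hi
            linarith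
        have htight : ∀ k, ∃ i, i ∈ I ∧ ⟪a i, z' k⟫ = b i := by
          intro k
          obtain ⟨i, hiI, hieq⟩ :=
            Finset.exists_mem_eq_inf' hI (fun i => (b i - ⟪a i, z k⟫) / (-⟪a i, v⟫))
          refine ⟨i, hiI, ?_⟩
          have h4 : ⟪a i, v⟫ < 0 := hmemI i hiI
          have h5 : ⟪a i, v⟫ ≠ 0 := ne_of_lt h4
          have h6 : t k = (b i - ⟪a i, z k⟫) / (-⟪a i, v⟫) := by rw [htdef]; exact hieq
          have h7 : -⟪a i, v⟫ ≠ 0 := neg_ne_zero.mpr h5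
          simp only [hz'def]
          rw [inner_sub_right, real_inner_smul_right, h6]
          field_simp
          ring
        choose iF hiFI hiFeq using htight
        obtain ⟨istar, hstar⟩ := Finite.exists_infinite_fiber iF
        have hfreq : ∃ᶠ k in atTop, iF k = istar := by
          rw [Nat.frequently_atTop_iff_infinite]
          exact Set.infinite_coe_iff.mp hstar
        obtain ⟨ψ, hψ, hψeq⟩ := Filter.extraction_of_frequently_atTop hfreq
        set y : ℕ → E := fun k => z' (ψ k) with hydef
        have hyP : ∀ k, y k ∈ P := fun k => hz'P _
        have hyeq : ∀ k, ⟪a istar, y k⟫ = b istar := by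
          intro k
          have := hiFeq (ψ k)
          rwa [hψeq k] at this
        have hfy_le : ∀ k, f (y k) ≤ f (z (ψ k)) := by
          intro k
          have h1 : y k = z (ψ k) + (-(t (ψ k))) • v := by
            rw [hydef]
            simp only [hz'def]
            rw [neg_smul, sub_eq_add_neg]
          rw [h1, hf, hf, quad_expand Q hQ c (z (ψ k)) v (-(t (ψ k))), hQv0]
          have h2 := hslope (z (ψ k)) (hzP _)
          have h3 := ht0 (ψ k)
          nlinarith [mul_nonneg h3 h2]
        have hfy : Tendsto (fun k => f (y k)) atTop (𝓝 m) :=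
          tendsto_of_tendsto_of_tendsto_of_le_of_le tendsto_const_nhds
            (hfz.comp hψ.tendsto_atTop) (fun k => hmle _ (hyP k)) hfy_le
        set p : E := y 0 with hpdef
        clear_value p
        have hpP : p ∈ P := hpdef ▸ hyP 0
        have hpeq : ⟪a istar, p⟫ = b istar := hpdef ▸ hyeq 0
        have hyP' : ∀ k, y k ∈ P := hyP
        have hyW0 : ∀ k, ⟪a istar, y k⟫ = b istar := hyeq
        clear_value y
        have histar : ⟪a istar, v⟫ < 0 := by
          have h := hiFI (ψ 0)
          rw [hψeq 0] at h
          exact hmemI _ h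
        have hastar : a istar ≠ 0 := by
          intro h
          rw [h, inner_zero_left] at histar
          exact lt_irrefl 0 histar
        set W := (ℝ ∙ (a istar))ᗮ with hWdef
        have hrankW : finrank ℝ W ≤ n := by
          have h1 : finrank ℝ (ℝ ∙ (a istar)) + finrank ℝ W = finrank ℝ E := by
            rw [hWdef]
            exact Submodule.finrank_add_finrank_orthogonal _
          rw [finrank_span_singleton hastar] at h1
          omega
        have hyW : ∀ k, y k - p ∈ W := by
          intro k
          rw [hWdef, Submodule.mem_orthogonal_singleton_iff_inner_right, inner_sub_right,
            hyeq k, hpeq, sub_self]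
        set Q' : W →ₗ[ℝ] W := W.orthogonalProjectionOnto.toLinearMap ∘ₗ Q ∘ₗ W.subtype
          with hQ'def
        have hQ'app : ∀ w : W, Q' w = W.orthogonalProjectionOnto (Q (w : E)) := fun w => rfl
        have hQ'sym : ∀ w₁ w₂ : W, ⟪Q' w₁, w₂⟫ = ⟪w₁, Q' w₂⟫ := by
          intro w₁ w₂
          rw [hQ'app, hQ'app, Submodule.inner_orthogonalProjectionOnto_eq_of_mem_right,
            Submodule.inner_orthogonalProjectionOnto_eq_of_mem_left]
          exact hQ _ _
        set c' : W := W.orthogonalProjectionOnto (Q p + c) with hc'def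
        set f' : W → ℝ := fun w => (1 / 2) * ⟪w, Q' w⟫ + ⟪c', w⟫ with hf'def
        have hf'coe : ∀ w : W, f' w = f (p + (w : E)) - f p := by
          intro w
          have h1 : f (p + (1 : ℝ) • (w : E)) =
              (f p + 1 * ⟪Q p + c, (w : E)⟫ + 1 ^ 2 * ((1 / 2) * ⟪(w : E), Q (w : E)⟫)) := by
            rw [hf, hf, quad_expand Q hQ c p (w : E) 1]
          rw [one_smul] at h1
          have h2 : f' w = (1 / 2) * ⟪(w : E), Q (w : E)⟫ + ⟪Q p + c, (w : E)⟫ := by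
            simp only [hf'def]
            rw [hQ'app, Submodule.inner_orthogonalProjectionOnto_eq_of_mem_left, hc'def,
              Submodule.inner_orthogonalProjectionOnto_eq_of_mem_right]
          rw [h2, h1]
          ring
        set a' : ι → W := fun i => W.orthogonalProjectionOnto (a i) with ha'def
        set b' : ι → ℝ := fun i => b i - ⟪a i, p⟫ with hb'def
        set P' : Set W := {w | ∀ i, ⟪a' i, w⟫ ≤ b' i} with hP'def
        have hkey : ∀ (w : W) i, ⟪a' i, w⟫ = ⟪a i, (w : E)⟫ := by
          intro w i
          simp only [ha'def]
          rw [Submodule.inner_orthogonalProjectionOnto_eq_of_mem_right]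
        have hmemP' : ∀ w : W, w ∈ P' ↔ (p + (w : E)) ∈ P := by
          intro w
          rw [hPdef, hP'def]
          simp only [Set.mem_setOf_eq, hkey, hb'def]
          constructor
          · intro h i
            have := h i
            rw [inner_add_right]
            linarith
          · intro h i
            have := h i
            rw [inner_add_right] at this
            linarith
        have hP'ne : P'.Nonempty := by
          refine ⟨⟨y 0 - p, hyW 0⟩, (hmemP' _).mpr ?_⟩
          have : p + (y 0 - p) = y 0 := by abel
          rw [this]
          exact hyP 0
        have hL' : ∀ w ∈ P', L - f p ≤ f' w := by
          intro w hw
          rw [hf'coe]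
          have := hL _ ((hmemP' w).mp hw)
          linarith
        obtain ⟨wm, hwmP, hwmmin⟩ :=
          IH W hrankW Q' hQ'sym c' f' (fun _ => rfl) ι a' b' P' rfl hP'ne (L - f p) hL'
        refine ⟨p + (wm : E), (hmemP' _).mp hwmP, fun yy hyy => ?_⟩
        suffices hsuf : f (p + (wm : E)) ≤ m from le_trans hsuf (hmle yy hyy)
        have hk : ∀ k, f (p + (wm : E)) ≤ f (y k) := by
          intro k
          have hmem : (⟨y k - p, hyW k⟩ : W) ∈ P' := by
            refine (hmemP' _).mpr ?_
            have h2 : p + ((⟨y k - p, hyW k⟩ : W) : E) = y k := by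
              simp only [Submodule.coe_mk]
              abel
            rw [h2]
            exact hyP k
          have h1 : f' wm ≤ f' ⟨y k - p, hyW k⟩ := hwmmin _ hmem
          rw [hf'coe, hf'coe] at h1
          have h2 : p + ((⟨y k - p, hyW k⟩ : W) : E) = y k := by
            simp only [Submodule.coe_mk]
            abel
          rw [h2] at h1
          linarith
        exact ge_of_tendsto hfy (Eventually.of_forall hk)

/-- Frank–Wolfe theorem: a quadratic function bounded below on a nonempty
polyhedron attains its minimum there. -/
theorem frank_wolfe {d k : ℕ}
    (Q : EuclideanSpace ℝ (Fin d) →ₗ[ℝ] EuclideanSpace ℝ (Fin d))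
    (hQ : ∀ x y : EuclideanSpace ℝ (Fin d), (inner ℝ (Q x) y : ℝ) = inner ℝ x (Q y))
    (c : EuclideanSpace ℝ (Fin d))
    (f : EuclideanSpace ℝ (Fin d) → ℝ)
    (hfdef : ∀ x, f x = (1 / 2) * inner ℝ x (Q x) + (inner ℝ c x : ℝ))
    (a : Fin k → EuclideanSpace ℝ (Fin d)) (b : Fin k → ℝ)
    (P : Set (EuclideanSpace ℝ (Fin d)))
    (hPdef : P = {x | ∀ i, (inner ℝ (a i) x : ℝ) ≤ b i})
    (hPne : P.Nonempty)
    (hbdd : ∃ L : ℝ, ∀ x ∈ P, L ≤ f x) :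
    ∃ x ∈ P, ∀ y ∈ P, f x ≤ f y := by
  obtain ⟨L, hL⟩ := hbdd
  exact frank_wolfe_aux (finrank ℝ (EuclideanSpace ℝ (Fin d))) _ le_rfl Q hQ c f hfdef
    (Fin k) a b P hPdef hPne L hL
end

section
/- Frank–Wolfe theorem on finite unions of polyhedra: Let Q : ℝ^d → ℝ^d be a symmetric linear map, c ∈ ℝ^d, and define the quadratic function f(x) = ½⟨x, Q x⟩ + ⟨c, x⟩. Let W = P_1 ∪ … ∪ P_N be a nonempty finite union of polyhedra in ℝ^d. If f is bounded below on W, then f attains its minimum over W. In particular, a convex quadratic function bounded below (e.g. nonnegative) on the feasible set of a mathematical program with affine equilibrium constraints, whose feasible region is a finite union of polyhedra, attains its global minimum. -/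
open Filter Topology Finset
open scoped RealInnerProductSpace

private lemma fw_expand {d : ℕ} (Q : EuclideanSpace ℝ (Fin d) →ₗ[ℝ] EuclideanSpace ℝ (Fin d))
    (hQ : ∀ x y : EuclideanSpace ℝ (Fin d), ⟪Q x, y⟫ = ⟪x, Q y⟫)
    (c x v : EuclideanSpace ℝ (Fin d)) (t : ℝ) :
    (1/2) * ⟪x + t • v, Q (x + t • v)⟫ + ⟪c, x + t • v⟫
      = ((1/2) * ⟪x, Q x⟫ + ⟪c, x⟫) + t * ⟪Q x + c, v⟫
        + t^2 * ((1/2) * ⟪v, Q v⟫) := by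
  have h1 : ⟪v, Q x⟫ = ⟪x, Q v⟫ := by
    rw [← hQ v x, real_inner_comm]
  simp only [map_add, map_smul, inner_add_left, inner_add_right, real_inner_smul_left,
    real_inner_smul_right]
  rw [h1, hQ x v]
  ring

/-- the polyhedral piece with equality set `S` inside subspace `U` -/
private def fwP {d k : ℕ} (U : Submodule ℝ (EuclideanSpace ℝ (Fin d)))
    (a : Fin k → EuclideanSpace ℝ (Fin d)) (b : Fin k → ℝ) (S : Finset (Fin k)) :
    Set (EuclideanSpace ℝ (Fin d)) :=
  {x | x ∈ U ∧ (∀ i, ⟪a i, x⟫ ≤ b i) ∧ ∀ i ∈ S, ⟪a i, x⟫ = b i}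

private lemma fw_key {d : ℕ} (Q : EuclideanSpace ℝ (Fin d) →ₗ[ℝ] EuclideanSpace ℝ (Fin d))
    (hQ : ∀ x y : EuclideanSpace ℝ (Fin d), ⟪Q x, y⟫ = ⟪x, Q y⟫)
    (c : EuclideanSpace ℝ (Fin d)) (f : EuclideanSpace ℝ (Fin d) → ℝ)
    (hf : ∀ x, f x = (1/2) * ⟪x, Q x⟫ + ⟪c, x⟫)
    {k : ℕ} (a : Fin k → EuclideanSpace ℝ (Fin d)) (b : Fin k → ℝ) (n : ℕ) :
    ∀ (U : Submodule ℝ (EuclideanSpace ℝ (Fin d))) (S : Finset (Fin k)),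
      Module.finrank ℝ U + (k - S.card) ≤ n →
      (fwP U a b S).Nonempty → (∃ L, ∀ x ∈ fwP U a b S, L ≤ f x) →
      ∃ x ∈ fwP U a b S, ∀ y ∈ fwP U a b S, f x ≤ f y := by
  have hfc : Continuous f := by
    have hfe : f = fun x => (1/2) * ⟪x, Q x⟫ + ⟪c, x⟫ := funext hf
    rw [hfe]
    exact (continuous_const.mul (continuous_id.inner Q.continuous_of_finiteDimensional)).add
      (continuous_const.inner continuous_id)
  induction n with
  | zero =>
    intro U S hm hne hbdd
    have hU : U = ⊥ := Submodule.finrank_eq_zero.mp (by omega)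
    obtain ⟨x₀, hx₀⟩ := hne
    refine ⟨x₀, hx₀, fun y hy => ?_⟩
    have h1 : x₀ = 0 := by simpa [hU] using hx₀.1
    have h2 : y = 0 := by simpa [hU] using hy.1
    exact le_of_eq (by rw [h1, h2])
  | succ n ih =>
    intro U S hm hne hbdd
    obtain ⟨L, hL⟩ := hbdd
    set P := fwP U a b S with hPdef
    have hPclosed : IsClosed P := by
      have : P = (U : Set _) ∩ ((⋂ i, {x | ⟪a i, x⟫ ≤ b i}) ∩ ⋂ i ∈ S, {x | ⟪a i, x⟫ = b i}) := by
        ext x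
        simp only [fwP, Set.mem_setOf_eq, Set.mem_inter_iff, Set.mem_iInter, SetLike.mem_coe,
          hPdef]
      rw [this]
      refine (Submodule.closed_of_finiteDimensional U).inter (IsClosed.inter ?_ ?_)
      · exact isClosed_iInter fun i => isClosed_le (continuous_const.inner continuous_id)
          continuous_const
      · exact isClosed_iInter fun i => isClosed_iInter fun _ =>
          isClosed_eq (continuous_const.inner continuous_id) continuous_const
    -- infimum and minimizing sequence
    set μ := sInf (f '' P) with hμdef
    have himgne : (f '' P).Nonempty := hne.image f
    have hbb : BddBelow (f '' P) := ⟨L, by rintro _ ⟨x, hx, rfl⟩; exact hL x hx⟩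
    obtain ⟨u, -, hu_t, hu_mem⟩ := exists_seq_tendsto_sInf himgne hbb
    choose x hxP hxf using hu_mem
    have htend : Tendsto (fun m => f (x m)) atTop (𝓝 μ) := by
      simpa [funext hxf] using hu_t
    have hmin_le : ∀ y ∈ P, μ ≤ f y := fun y hy => csInf_le hbb ⟨y, hy, rfl⟩
    have suffices_le : ∀ z ∈ P, f z ≤ μ → ∃ w ∈ P, ∀ y ∈ P, f w ≤ f y :=
      fun z hz hzle => ⟨z, hz, fun y hy => hzle.trans (hmin_le y hy)⟩
    by_cases hbs : ∃ R, {m | x m ∈ Metric.closedBall (0 : EuclideanSpace ℝ (Fin d)) R}.Infinite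
    · -- bounded subsequence: compactness
      obtain ⟨R, hR⟩ := hbs
      have hfreq : ∃ᶠ m in atTop, x m ∈ P ∩ Metric.closedBall 0 R := by
        rw [Nat.frequently_atTop_iff_infinite]
        exact hR.mono fun m hm' => ⟨hxP m, hm'⟩
      have hcpt : IsCompact (P ∩ Metric.closedBall 0 R) :=
        (isCompact_closedBall _ _).inter_left hPclosed
      obtain ⟨z, hz, φ, hφ, hconv⟩ := hcpt.tendsto_subseq' hfreq
      refine suffices_le z hz.1 (le_of_eq ?_)
      have h1 : Tendsto (fun m => f (x (φ m))) atTop (𝓝 (f z)) :=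
        (hfc.tendsto z).comp hconv
      have h2 : Tendsto (fun m => f (x (φ m))) atTop (𝓝 μ) :=
        htend.comp hφ.tendsto_atTop
      exact tendsto_nhds_unique h1 h2
    · -- norms tend to infinity
      have hto : Tendsto (fun m => ‖x m‖) atTop atTop := by
        rw [tendsto_atTop]
        intro R
        push_neg at hbs
        have hfin : {m | x m ∈ Metric.closedBall (0 : EuclideanSpace ℝ (Fin d)) R}.Finite :=
          hbs R
        have := hfin.eventually_cofinite_notMem
        rw [Nat.cofinite_eq_atTop] at this
        exact this.mono fun m hm' => by
          simp only [Set.mem_setOf_eq, Metric.mem_closedBall, dist_zero_right, not_le] at hm'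
          exact hm'.le
      set v : ℕ → EuclideanSpace ℝ (Fin d) := fun m => ‖x m‖⁻¹ • x m with hvdef
      have hvball : ∀ m, v m ∈ Metric.closedBall (0 : EuclideanSpace ℝ (Fin d)) 1 := by
        intro m
        simp only [Metric.mem_closedBall, dist_zero_right, hvdef, norm_smul, norm_inv,
          norm_norm]
        rcases eq_or_ne (x m) 0 with h | h
        · simp [h]
        · rw [inv_mul_cancel₀ (norm_ne_zero_iff.mpr h)]
      obtain ⟨dd, -, φ, hφ, hconv⟩ := (isCompact_closedBall (0 : EuclideanSpace ℝ (Fin d))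
        1).tendsto_subseq hvball
      have hφto : Tendsto (fun m => ‖x (φ m)‖) atTop atTop := hto.comp hφ.tendsto_atTop
      have hinv : Tendsto (fun m => ‖x (φ m)‖⁻¹) atTop (𝓝 0) :=
        tendsto_inv_atTop_zero.comp hφto
      have hev1 : ∀ᶠ m in atTop, 1 ≤ ‖x (φ m)‖ := hφto.eventually_ge_atTop 1
      have hd1 : ‖dd‖ = 1 := by
        have h1 : Tendsto (fun m => ‖v (φ m)‖) atTop (𝓝 ‖dd‖) := hconv.norm
        have h2 : ∀ᶠ m in atTop, ‖v (φ m)‖ = 1 := by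
          filter_upwards [hev1] with m hm'
          have hx0 : x (φ m) ≠ 0 := by
            intro h; rw [h, norm_zero] at hm'; linarith
          simp only [hvdef, norm_smul, norm_inv, norm_norm]
          rw [inv_mul_cancel₀ (norm_ne_zero_iff.mpr hx0)]
        exact tendsto_nhds_unique (h1.congr' h2) tendsto_const_nhds
      have hdd0 : dd ≠ 0 := fun h => by simp [h] at hd1
      have hdU : dd ∈ U := by
        refine (Submodule.closed_of_finiteDimensional U).mem_of_tendsto hconv
          (Eventually.of_forall fun m => ?_)
        exact Submodule.smul_mem U _ (hxP (φ m)).1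
      have hconvA : ∀ w : EuclideanSpace ℝ (Fin d),
          Tendsto (fun m => ⟪w, v (φ m)⟫) atTop (𝓝 ⟪w, dd⟫) :=
        fun w => Tendsto.inner tendsto_const_nhds hconv
      have hai : ∀ i, ⟪a i, dd⟫ ≤ 0 := by
        intro i
        have hle : ∀ m, ⟪a i, v (φ m)⟫ ≤ ‖x (φ m)‖⁻¹ * b i := by
          intro m
          rw [hvdef]
          simp only [real_inner_smul_right]
          exact mul_le_mul_of_nonneg_left ((hxP (φ m)).2.1 i) (inv_nonneg.mpr (norm_nonneg _))
        have h0 : Tendsto (fun m => ‖x (φ m)‖⁻¹ * b i) atTop (𝓝 0) := by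
          simpa using hinv.mul_const (b i)
        exact le_of_tendsto_of_tendsto' (hconvA (a i)) h0 hle
      have haiS : ∀ i ∈ S, ⟪a i, dd⟫ = 0 := by
        intro i hi
        have heq : ∀ m, ⟪a i, v (φ m)⟫ = ‖x (φ m)‖⁻¹ * b i := by
          intro m
          rw [hvdef]
          simp only [real_inner_smul_right]
          rw [(hxP (φ m)).2.2 i hi]
        have h0 : Tendsto (fun m => ‖x (φ m)‖⁻¹ * b i) atTop (𝓝 0) := by
          simpa using hinv.mul_const (b i)
        exact tendsto_nhds_unique ((hconvA (a i)).congr heq) h0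
      have hdQd : ⟪dd, Q dd⟫ = 0 := by
        have hid : ∀ m, ⟪v m, Q (v m)⟫
            = 2 * (‖x m‖⁻¹)^2 * f (x m) - 2 * ‖x m‖⁻¹ * ⟪c, v m⟫ := by
          intro m
          simp only [hvdef, map_smul, real_inner_smul_left, real_inner_smul_right, hf]
          ring
        have h1 : Tendsto (fun m => ⟪v (φ m), Q (v (φ m))⟫) atTop (𝓝 ⟪dd, Q dd⟫) :=
          Tendsto.inner hconv ((Q.continuous_of_finiteDimensional.tendsto dd).comp hconv)
        have h2 : Tendsto
            (fun m => 2 * (‖x (φ m)‖⁻¹)^2 * f (x (φ m)) - 2 * ‖x (φ m)‖⁻¹ * ⟪c, v (φ m)⟫)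
            atTop (𝓝 0) := by
          have ha : Tendsto (fun m => 2 * (‖x (φ m)‖⁻¹)^2 * f (x (φ m))) atTop (𝓝 0) := by
            have := ((hinv.pow 2).const_mul 2).mul (htend.comp hφ.tendsto_atTop)
            simpa using this
          have hb : Tendsto (fun m => 2 * ‖x (φ m)‖⁻¹ * ⟪c, v (φ m)⟫) atTop (𝓝 0) := by
            have := (hinv.const_mul 2).mul (hconvA c)
            simpa using this
          simpa using ha.sub hb
        exact tendsto_nhds_unique (h1.congr (fun m => (hid (φ m)))) (by simpa using h2)
      -- value of f along the direction dd
      have hfray : ∀ z (t : ℝ), f (z + t • dd) = f z + t * ⟪Q z + c, dd⟫ := by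
        intro z t
        rw [hf, hf, fw_expand Q hQ c z dd t, hdQd]
        ring
      -- the ray stays in P
      have hray : ∀ z ∈ P, ∀ t : ℝ, 0 ≤ t → z + t • dd ∈ P := by
        intro z hz t ht
        refine ⟨U.add_mem hz.1 (U.smul_mem _ hdU), fun i => ?_, fun i hi => ?_⟩
        · rw [inner_add_right, real_inner_smul_right]
          have : t * ⟪a i, dd⟫ ≤ 0 := mul_nonpos_of_nonneg_of_nonpos ht (hai i)
          linarith [hz.2.1 i]
        · rw [inner_add_right, real_inner_smul_right, haiS i hi, mul_zero, add_zero]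
          exact hz.2.2 i hi
      have hgrad : ∀ z ∈ P, 0 ≤ ⟪Q z + c, dd⟫ := by
        intro z hz
        by_contra hg
        push_neg at hg
        set g := ⟪Q z + c, dd⟫ with hgdef
        set t : ℝ := max 0 ((L - f z) / g + 1) with htdef
        have ht0 : 0 ≤ t := le_max_left _ _
        have hlt : (L - f z) / g < t := lt_of_lt_of_le (lt_add_one _) (le_max_right _ _)
        have h2 : t * g < L - f z := by
          have := mul_lt_mul_of_neg_right hlt hg
          rwa [div_mul_cancel₀ _ (ne_of_lt hg)] at this
        have := hL _ (hray z hz t ht0)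
        rw [hfray z t] at this
        linarith
      by_cases hI : ∃ i, ⟪a i, dd⟫ < 0
      · -- face case: move to the boundary of some constraint
        set I : Finset (Fin k) := Finset.univ.filter (fun i => ⟪a i, dd⟫ < 0) with hIdef
        have hIne : I.Nonempty := by
          obtain ⟨i, hi⟩ := hI
          exact ⟨i, Finset.mem_filter.mpr ⟨Finset.mem_univ i, hi⟩⟩
        set q : ℕ → Fin k → ℝ := fun m i => (b i - ⟪a i, x m⟫) / (-⟪a i, dd⟫) with hqdef
        have hsel : ∀ m, ∃ i ∈ I, ∀ j ∈ I, q m i ≤ q m j :=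
          fun m => I.exists_min_image (q m) hIne
        choose iF hiFmem hiFmin using hsel
        have hIneg : ∀ i ∈ I, ⟪a i, dd⟫ < 0 := by
          intro i hi
          exact (Finset.mem_filter.mp hi).2
        set t : ℕ → ℝ := fun m => q m (iF m) with htdef
        have ht0 : ∀ m, 0 ≤ t m := by
          intro m
          apply div_nonneg
          · linarith [(hxP m).2.1 (iF m)]
          · linarith [hIneg _ (hiFmem m)]
        set x' : ℕ → EuclideanSpace ℝ (Fin d) := fun m => x m + (-(t m)) • dd with hx'def
        have hx'in : ∀ m j, ⟪a j, x' m⟫ = ⟪a j, x m⟫ - t m * ⟪a j, dd⟫ := by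
          intro m j
          rw [hx'def]
          simp only [inner_add_right, real_inner_smul_right]
          ring
        have hx'P : ∀ m, x' m ∈ P := by
          intro m
          refine ⟨U.add_mem (hxP m).1 (U.smul_mem _ hdU), fun j => ?_, fun j hj => ?_⟩
          · rw [hx'in m j]
            rcases lt_or_ge ⟪a j, dd⟫ 0 with hj | hj
            · have hjI : j ∈ I := Finset.mem_filter.mpr ⟨Finset.mem_univ j, hj⟩
              have h1 : t m ≤ q m j := hiFmin m j hjI
              have h2 : t m * (-⟪a j, dd⟫) ≤ b j - ⟪a j, x m⟫ := by
                rw [hqdef] at h1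
                exact (le_div_iff₀ (by linarith)).mp h1
              linarith
            · have hj0 : ⟪a j, dd⟫ = 0 := le_antisymm (hai j) hj
              rw [hj0]
              simpa using (hxP m).2.1 j
          · rw [hx'in m j, haiS j hj, mul_zero, sub_zero]
            exact (hxP m).2.2 j hj
        have hactive : ∀ m, ⟪a (iF m), x' m⟫ = b (iF m) := by
          intro m
          rw [hx'in m (iF m)]
          have hne0 : -⟪a (iF m), dd⟫ ≠ 0 := by linarith [hIneg _ (hiFmem m)]
          have : t m * (-⟪a (iF m), dd⟫) = b (iF m) - ⟪a (iF m), x m⟫ := by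
            rw [htdef, hqdef]
            exact div_mul_cancel₀ _ hne0
          linarith [this]
        have hfx' : ∀ m, f (x' m) ≤ f (x m) := by
          intro m
          rw [hx'def, hfray]
          have h1 : 0 ≤ ⟪Q (x m) + c, dd⟫ := hgrad _ (hxP m)
          nlinarith [ht0 m]
        -- pigeonhole on the active index
        have : ∃ i₀, {m | iF m = i₀}.Infinite := by
          obtain ⟨i₀, hi₀⟩ := Finite.exists_infinite_fiber iF
          exact ⟨i₀, by rwa [Set.infinite_coe_iff] at hi₀⟩
        obtain ⟨i₀, hfib⟩ := this
        have hi₀I : i₀ ∈ I := by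
          obtain ⟨m₀, hm₀⟩ := hfib.nonempty
          exact hm₀ ▸ hiFmem m₀
        have hi₀S : i₀ ∉ S := fun h => absurd (haiS i₀ h) (ne_of_lt (hIneg i₀ hi₀I))
        set S' : Finset (Fin k) := insert i₀ S with hS'def
        have hsub : fwP U a b S' ⊆ P := by
          intro y hy
          exact ⟨hy.1, hy.2.1, fun i hi => hy.2.2 i (Finset.mem_insert_of_mem hi)⟩
        have hx'P' : ∀ m, iF m = i₀ → x' m ∈ fwP U a b S' := by
          intro m hm'
          refine ⟨(hx'P m).1, (hx'P m).2.1, fun i hi => ?_⟩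
          rcases Finset.mem_insert.mp hi with h | h
          · rw [h, ← hm']; exact hactive m
          · exact (hx'P m).2.2 i h
        have hScard : S.card < k := by
          have h1 : S ⊂ Finset.univ := Finset.ssubset_univ_iff.mpr
            (fun h => hi₀S (h ▸ Finset.mem_univ i₀))
          have := Finset.card_lt_card h1
          simpa using this
        have hmeas' : Module.finrank ℝ U + (k - S'.card) ≤ n := by
          rw [hS'def, Finset.card_insert_of_notMem hi₀S]
          omega
        obtain ⟨m₀, hm₀⟩ := hfib.nonempty
        have hne' : (fwP U a b S').Nonempty := ⟨x' m₀, hx'P' m₀ hm₀⟩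
        have hbdd' : ∃ L', ∀ y ∈ fwP U a b S', L' ≤ f y := ⟨L, fun y hy => hL y (hsub hy)⟩
        obtain ⟨w, hwP', hwmin⟩ := ih U S' hmeas' hne' hbdd'
        refine suffices_le w (hsub hwP') ?_
        by_contra hlt
        push_neg at hlt
        have hev : ∀ᶠ m in atTop, f (x m) < f w := htend.eventually_lt_const hlt
        have hfr : ∃ᶠ m in atTop, iF m = i₀ := Nat.frequently_atTop_iff_infinite.mpr hfib
        obtain ⟨m, hm1, hm2⟩ := (hfr.and_eventually hev).exists
        have : f w ≤ f (x' m) := hwmin _ (hx'P' m hm1)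
        linarith [hfx' m]
      · -- all ⟪a i, dd⟫ = 0 : project out the direction dd
        push_neg at hI
        have hai0 : ∀ i, ⟪a i, dd⟫ = 0 := fun i => le_antisymm (hai i) (hI i)
        have hray2 : ∀ z ∈ P, ∀ t : ℝ, z + t • dd ∈ P := by
          intro z hz t
          refine ⟨U.add_mem hz.1 (U.smul_mem _ hdU), fun i => ?_, fun i hi => ?_⟩
          · rw [inner_add_right, real_inner_smul_right, hai0 i, mul_zero, add_zero]
            exact hz.2.1 i
          · rw [inner_add_right, real_inner_smul_right, hai0 i, mul_zero, add_zero]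
            exact hz.2.2 i hi
        have hgrad0 : ∀ z ∈ P, ⟪Q z + c, dd⟫ = 0 := by
          intro z hz
          refine le_antisymm ?_ (hgrad z hz)
          by_contra hg
          push_neg at hg
          set g := ⟪Q z + c, dd⟫ with hgdef
          have hgne : g ≠ 0 := ne_of_gt hg
          have := hL _ (hray2 z hz ((L - f z - 1) / g))
          rw [hfray z ((L - f z - 1) / g), div_mul_cancel₀ _ hgne] at this
          linarith
        set x' : ℕ → EuclideanSpace ℝ (Fin d) := fun m => x m + (-⟪x m, dd⟫) • dd with hx'def
        have hx'P : ∀ m, x' m ∈ P := fun m => hray2 _ (hxP m) _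
        have hfx' : ∀ m, f (x' m) = f (x m) := by
          intro m
          rw [hx'def, hfray, hgrad0 _ (hxP m), mul_zero, add_zero]
        set U' : Submodule ℝ (EuclideanSpace ℝ (Fin d)) :=
          U ⊓ (Submodule.span ℝ {dd})ᗮ with hU'def
        have hddnot : dd ∉ U' := by
          intro h
          have := Submodule.mem_orthogonal_singleton_iff_inner_right.mp h.2
          rw [real_inner_self_eq_norm_sq, hd1] at this
          norm_num at this
        have hU'lt : U' < U := by
          refine lt_of_le_of_ne inf_le_left fun h => hddnot ?_
          rw [h]; exact hdU
        have hsub : fwP U' a b S ⊆ P := fun y hy => ⟨hy.1.1, hy.2.1, hy.2.2⟩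
        have hx'P' : ∀ m, x' m ∈ fwP U' a b S := by
          intro m
          have hperp : x' m ∈ (Submodule.span ℝ {dd})ᗮ := by
            rw [Submodule.mem_orthogonal_singleton_iff_inner_right]
            show ⟪dd, x m + (-⟪x m, dd⟫) • dd⟫ = 0
            rw [inner_add_right, real_inner_smul_right, real_inner_self_eq_norm_sq, hd1,
              real_inner_comm dd (x m)]
            ring
          exact ⟨⟨(hx'P m).1, hperp⟩, (hx'P m).2.1, (hx'P m).2.2⟩
        have hmeas' : Module.finrank ℝ U' + (k - S.card) ≤ n := by
          have := Submodule.finrank_lt_finrank_of_lt hU'lt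
          omega
        have hne' : (fwP U' a b S).Nonempty := ⟨x' 0, hx'P' 0⟩
        have hbdd' : ∃ L', ∀ y ∈ fwP U' a b S, L' ≤ f y := ⟨L, fun y hy => hL y (hsub hy)⟩
        obtain ⟨w, hwP', hwmin⟩ := ih U' S hmeas' hne' hbdd'
        refine suffices_le w (hsub hwP') ?_
        have hwle : ∀ m, f w ≤ f (x m) := by
          intro m
          rw [← hfx' m]
          exact hwmin _ (hx'P' m)
        exact ge_of_tendsto' htend hwle

/-- Frank–Wolfe theorem on finite unions of polyhedra: a quadratic function
bounded below on a nonempty finite union of polyhedra attains its minimum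
there (as in MPECs with affine equilibrium constraints). -/
theorem frank_wolfe_union_polyhedra {d N : ℕ}
    (Q : EuclideanSpace ℝ (Fin d) →ₗ[ℝ] EuclideanSpace ℝ (Fin d))
    (hQ : ∀ x y : EuclideanSpace ℝ (Fin d), (inner ℝ (Q x) y : ℝ) = inner ℝ x (Q y))
    (c : EuclideanSpace ℝ (Fin d))
    (f : EuclideanSpace ℝ (Fin d) → ℝ)
    (hfdef : ∀ x, f x = (1 / 2) * inner ℝ x (Q x) + (inner ℝ c x : ℝ))
    (P : Fin N → Set (EuclideanSpace ℝ (Fin d)))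
    (hPpoly : ∀ j, ∃ (k : ℕ) (a : Fin k → EuclideanSpace ℝ (Fin d)) (b : Fin k → ℝ),
      P j = {x | ∀ i, (inner ℝ (a i) x : ℝ) ≤ b i})
    (W : Set (EuclideanSpace ℝ (Fin d)))
    (hWdef : W = ⋃ j, P j)
    (hWne : W.Nonempty)
    (hbdd : ∃ L : ℝ, ∀ x ∈ W, L ≤ f x) :
    ∃ x ∈ W, ∀ y ∈ W, f x ≤ f y := by
  classical
  obtain ⟨L, hL⟩ := hbdd
  have hsubW : ∀ j, P j ⊆ W := fun j => hWdef ▸ Set.subset_iUnion P j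
  have hmin : ∀ j : Fin N, (P j).Nonempty → ∃ x ∈ P j, ∀ y ∈ P j, f x ≤ f y := by
    intro j hne
    obtain ⟨k, a, b, hPj⟩ := hPpoly j
    have hfw : P j = fwP (⊤ : Submodule ℝ (EuclideanSpace ℝ (Fin d))) a b (∅ : Finset (Fin k)) := by
      rw [hPj]
      ext x
      simp [fwP]
    rw [hfw] at hne ⊢
    exact fw_key Q hQ c f hfdef a b
      (Module.finrank ℝ (⊤ : Submodule ℝ (EuclideanSpace ℝ (Fin d))) + k) ⊤ ∅ (by simp)
      hne ⟨L, fun x hx => hL x (hsubW j (hfw ▸ hx))⟩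
  choose! xm hxmem hxmin using hmin
  set J : Finset (Fin N) := Finset.univ.filter (fun j => (P j).Nonempty) with hJdef
  have hJne : J.Nonempty := by
    obtain ⟨x₀, hx₀⟩ := hWne
    rw [hWdef] at hx₀
    obtain ⟨j₀, hj₀⟩ := Set.mem_iUnion.mp hx₀
    exact ⟨j₀, Finset.mem_filter.mpr ⟨Finset.mem_univ j₀, ⟨x₀, hj₀⟩⟩⟩
  obtain ⟨j₁, hj₁J, hj₁min⟩ := J.exists_min_image (fun j => f (xm j)) hJne
  have hj₁ne : (P j₁).Nonempty := (Finset.mem_filter.mp hj₁J).2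
  refine ⟨xm j₁, hsubW j₁ (hxmem j₁ hj₁ne), fun y hy => ?_⟩
  rw [hWdef] at hy
  obtain ⟨j, hj⟩ := Set.mem_iUnion.mp hy
  have hjne : (P j).Nonempty := ⟨y, hj⟩
  have hjJ : j ∈ J := Finset.mem_filter.mpr ⟨Finset.mem_univ j, hjne⟩
  exact (hj₁min j hjJ).trans (hxmin j hjne y hj)
end

section
/- The set 𝓕 = {(x, −1) : x ∈ [0, 1]} ∪ {(x, 0) : x ∈ [−1, 0)} ⊆ ℝ² is neither closed nor convex: the sequence (−1/k, 0) lies in 𝓕 and converges to (0, 0) ∉ 𝓕, and 𝓕 fails convexity. -/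
open scoped Topology

/-- The MPEC feasible region `𝓕 = {(x,−1) : x ∈ [0,1]} ∪ {(x,0) : x ∈ [−1,0)}`
is neither closed nor convex: the sequence `(−1/k, 0)` lies in `𝓕` and converges
to `(0,0) ∉ 𝓕`, and `𝓕` fails convexity. -/
theorem mpec_feasible_region_not_closed_not_convex
    (F : Set (ℝ × ℝ))
    (hF : F = (fun x => (x, (-1 : ℝ))) '' Set.Icc (0 : ℝ) 1 ∪
      (fun x => (x, (0 : ℝ))) '' Set.Ico (-1 : ℝ) 0) :
    (∀ k : ℕ, 1 ≤ k → (-(1 / (k : ℝ)), (0 : ℝ)) ∈ F) ∧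
    Filter.Tendsto (fun k : ℕ => ((-(1 / (k : ℝ)), (0 : ℝ)) : ℝ × ℝ))
      Filter.atTop (𝓝 ((0 : ℝ), (0 : ℝ))) ∧
    ((0 : ℝ), (0 : ℝ)) ∉ F ∧
    ¬ IsClosed F ∧
    ¬ Convex ℝ F := by
  have hmem : ∀ k : ℕ, 1 ≤ k → (-(1 / (k : ℝ)), (0 : ℝ)) ∈ F := by
    intro k hk
    have hk' : (1 : ℝ) ≤ (k : ℝ) := by exact_mod_cast hk
    have hkpos : (0 : ℝ) < k := lt_of_lt_of_le one_pos hk'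
    rw [hF]
    right
    refine ⟨-(1 / (k : ℝ)), ⟨?_, ?_⟩, rfl⟩
    · have : 1 / (k : ℝ) ≤ 1 := by
        rw [div_le_one hkpos]; exact hk'
      linarith
    · have : 0 < 1 / (k : ℝ) := by positivity
      linarith
  have htend : Filter.Tendsto (fun k : ℕ => ((-(1 / (k : ℝ)), (0 : ℝ)) : ℝ × ℝ))
      Filter.atTop (𝓝 ((0 : ℝ), (0 : ℝ))) := by
    have h1 : Filter.Tendsto (fun k : ℕ => -(1 / (k : ℝ))) Filter.atTop (𝓝 0) := by
      have : Filter.Tendsto (fun n : ℕ => 1 / (n : ℝ)) Filter.atTop (𝓝 0) :=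
        tendsto_one_div_atTop_nhds_zero_nat
      simpa using this.neg
    exact (h1.prodMk_nhds tendsto_const_nhds)
  have hnot : ((0 : ℝ), (0 : ℝ)) ∉ F := by
    rw [hF]
    rintro (⟨x, hx, hEq⟩ | ⟨x, hx, hEq⟩)
    · have : (-1 : ℝ) = 0 := congrArg Prod.snd hEq
      norm_num at this
    · have hx0 : x = 0 := congrArg Prod.fst hEq
      rw [hx0] at hx
      exact lt_irrefl _ hx.2
  refine ⟨hmem, htend, hnot, ?_, ?_⟩
  · intro hc
    exact hnot (hc.mem_of_tendsto htend
      (Filter.eventually_atTop.2 ⟨1, fun k hk => hmem k hk⟩))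
  · intro hconv
    have hA : ((0 : ℝ), (-1 : ℝ)) ∈ F := by
      rw [hF]; left; exact ⟨0, ⟨le_refl _, by norm_num⟩, rfl⟩
    have hB : ((-1 : ℝ), (0 : ℝ)) ∈ F := by
      rw [hF]; right; exact ⟨-1, ⟨le_refl _, by norm_num⟩, rfl⟩
    have hmid := hconv hA hB (by norm_num : (0:ℝ) ≤ 1/2)
      (by norm_num : (0:ℝ) ≤ 1/2) (by norm_num)
    have hmid' : ((-(1/2) : ℝ), (-(1/2) : ℝ)) ∈ F := by
      convert hmid using 2 <;> norm_num
    rw [hF] at hmid'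
    rcases hmid' with ⟨x, hx, hEq⟩ | ⟨x, hx, hEq⟩
    · have : (-1 : ℝ) = -(1/2) := congrArg Prod.snd hEq
      norm_num at this
    · have : (0 : ℝ) = -(1/2) := congrArg Prod.snd hEq
      norm_num at this
end
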